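/- Consider a simple bail process M(t) = G(t) − Σ_{j : a_j ≤ t} b_j, where G is nondecreasing and continuous at each arrival time a_j (a strictly increasing sequence of positive reals with finitely many a_j in each bounded interval), and b_j > 0. Let M*(t) = φ[M](t) be the Skorokhod map output. Then the running infimum I(t) := inf_{s ≤ t} min(0, M(s)) is constant on every interval not containing an arrival time, and it strictly decreases at an arrival time a_j if and only if M*(a_j−) < b_j. -/

import Mathlib

open Filter Set

/-- Running infimum `I(t) = inf_{s ≤ t} min(0, M(s))`. -/
noncomputable def runInf (M : ℝ → ℝ) (t : ℝ) : ℝ :=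
  sInf ((fun s => min 0 (M s)) '' Set.Icc 0 t)

section Aux

variable {a b : ℕ → ℝ}

lemma aux_summable (hainf : Tendsto a atTop atTop) (t : ℝ) :
    Summable (fun k => if a k ≤ t then b k else 0) := by
  have h : ∀ᶠ k in atTop, t < a k := hainf.eventually (eventually_gt_atTop t)
  rw [eventually_atTop] at h
  obtain ⟨N, hN⟩ := h
  apply summable_of_ne_finset_zero (s := Finset.range N)
  intro k hk
  rw [if_neg]
  exact not_le.mpr (hN k (le_of_not_gt fun h => hk (Finset.mem_range.mpr h)))

lemma aux_S_mono (hainf : Tendsto a atTop atTop) (hb : ∀ j, 0 ≤ b j)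
    {s t : ℝ} (hst : s ≤ t) :
    (∑' k, if a k ≤ s then b k else 0) ≤ ∑' k, if a k ≤ t then b k else 0 := by
  apply Summable.tsum_le_tsum _ (aux_summable hainf s) (aux_summable hainf t)
  intro k
  by_cases h : a k ≤ s
  · rw [if_pos h, if_pos (h.trans hst)]
  · rw [if_neg h]
    by_cases h' : a k ≤ t
    · rw [if_pos h']; exact hb k
    · rw [if_neg h']

lemma aux_S_eq {t : ℝ} {j : ℕ} (h : ∀ k, a k ≤ t ↔ k < j) :
    (∑' k, if a k ≤ t then b k else 0) = ∑ k ∈ Finset.range j, b k := by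
  rw [tsum_eq_sum (s := Finset.range j)]
  · exact Finset.sum_congr rfl fun k hk => if_pos ((h k).mpr (Finset.mem_range.mp hk))
  · intro k hk
    exact if_neg fun hle => hk (Finset.mem_range.mpr ((h k).mp hle))

end Aux

/-- For a simple bail process `M(t) = G(t) − Σ_{a_j ≤ t} b_j`, the running infimum
`I(t) = inf_{s ≤ t} min(0, M(s))` is constant on every interval containing no arrival
time, and it strictly decreases at an arrival `a_j` iff `M*(a_j−) < b_j`, where
`M* = φ[M]` is the Skorokhod reflection. -/
theorem runInf_constant_and_decrease_iff
    (G : ℝ → ℝ) (a b : ℕ → ℝ) (M : ℝ → ℝ)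
    (hGmono : Monotone G) (hG0 : 0 ≤ G 0)
    (hGright : ∀ t, ContinuousWithinAt G (Set.Ici t) t)
    (ha : StrictMono a) (hapos : ∀ j, 0 < a j)
    (hainf : Tendsto a atTop atTop)
    (hGa : ∀ j, ContinuousAt G (a j))
    (hb : ∀ j, 0 < b j)
    (hM : ∀ t, M t = G t - ∑' j, if a j ≤ t then b j else 0)
    -- left limits of the reflected process and of the running infimum at the arrivals
    (Mstarleft Ileft : ℕ → ℝ)
    (hMstarleft : ∀ j, Tendsto (fun t => M t - runInf M t)
      (nhdsWithin (a j) (Set.Iio (a j))) (nhds (Mstarleft j)))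
    (hIleft : ∀ j, Tendsto (runInf M)
      (nhdsWithin (a j) (Set.Iio (a j))) (nhds (Ileft j))) :
    (∀ t₁ t₂, 0 ≤ t₁ → t₁ ≤ t₂ → (∀ j, ¬ (t₁ < a j ∧ a j ≤ t₂)) →
        runInf M t₁ = runInf M t₂) ∧
    (∀ j, runInf M (a j) < Ileft j ↔ Mstarleft j < b j) := by
  set S : ℝ → ℝ := fun t => ∑' k, if a k ≤ t then b k else 0 with hS
  have hMS : ∀ t, M t = G t - S t := hM
  have hSmono : Monotone S := fun s t hst => aux_S_mono hainf (fun j => (hb j).le) hst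
  -- lower bound on min 0 (M s) for s ∈ [0, t]
  have hMlb : ∀ t, ∀ s ∈ Icc (0:ℝ) t, min 0 (G 0 - S t) ≤ min 0 (M s) := by
    intro t s hs
    have h1 : G 0 - S t ≤ M s := by
      rw [hMS]
      have := hGmono hs.1
      have := hSmono hs.2
      linarith
    exact min_le_min le_rfl h1
  have hbdd : ∀ t, BddBelow ((fun s => min 0 (M s)) '' Icc 0 t) := by
    intro t
    refine ⟨min 0 (G 0 - S t), ?_⟩
    rintro x ⟨s, hs, rfl⟩
    exact hMlb t s hs
  have hne : ∀ t, 0 ≤ t → ((fun s => min 0 (M s)) '' Icc 0 t).Nonempty := by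
    intro t ht
    exact ⟨min 0 (M 0), 0, ⟨le_rfl, ht⟩, rfl⟩
  -- Part 1
  have key : ∀ t₁ t₂, 0 ≤ t₁ → t₁ ≤ t₂ → (∀ j, ¬ (t₁ < a j ∧ a j ≤ t₂)) →
      runInf M t₁ = runInf M t₂ := by
    intro t₁ t₂ ht₁ ht₁₂ harr
    apply le_antisymm
    · apply le_csInf (hne t₂ (ht₁.trans ht₁₂))
      rintro x ⟨s, hs, rfl⟩
      rcases le_or_gt s t₁ with h | h
      · exact csInf_le (hbdd t₁) ⟨s, ⟨hs.1, h⟩, rfl⟩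
      · have hSs : S s = S t₁ := by
          apply tsum_congr
          intro k
          by_cases hk : a k ≤ t₁
          · rw [if_pos hk, if_pos (hk.trans h.le)]
          · rw [if_neg hk, if_neg]
            intro hks
            exact harr k ⟨not_le.mp hk, hks.trans hs.2⟩
        have hMs : M t₁ ≤ M s := by
          rw [hMS, hMS, hSs]
          have := hGmono h.le
          linarith
        calc runInf M t₁ ≤ min 0 (M t₁) := csInf_le (hbdd t₁) ⟨t₁, ⟨ht₁, le_rfl⟩, rfl⟩
          _ ≤ min 0 (M s) := min_le_min le_rfl hMs
    · exact csInf_le_csInf (hbdd t₂) (hne t₁ ht₁)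
        (image_mono (Icc_subset_Icc_right ht₁₂))
  refine ⟨key, ?_⟩
  intro j
  -- choose a point c just before a j with no arrivals in (c, a j)
  set c : ℝ := if j = 0 then a 0 / 2 else a (j - 1) with hc
  have hc0 : 0 < c := by
    by_cases h : j = 0
    · rw [hc, if_pos h]; exact half_pos (hapos 0)
    · rw [hc, if_neg h]; exact hapos _
  have hcaj : c < a j := by
    by_cases h : j = 0
    · rw [hc, if_pos h, h]; exact half_lt_self (hapos 0)
    · rw [hc, if_neg h]
      exact ha (Nat.sub_lt (Nat.pos_of_ne_zero h) one_pos)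
  have hiff : ∀ t, c ≤ t → t < a j → ∀ k, (a k ≤ t ↔ k < j) := by
    intro t h1 h2 k
    constructor
    · intro hk
      exact ha.lt_iff_lt.mp (lt_of_le_of_lt hk h2)
    · intro hk
      have hj : j ≠ 0 := by omega
      have : a k ≤ a (j - 1) := ha.monotone (by omega)
      rw [hc, if_neg hj] at h1
      exact this.trans h1
  set Sm : ℝ := ∑ k ∈ Finset.range j, b k with hSm
  have hSconst : ∀ t, c ≤ t → t < a j → S t = Sm := fun t h1 h2 => aux_S_eq (hiff t h1 h2)
  have hMconst : ∀ t, c ≤ t → t < a j → M t = G t - Sm := by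
    intro t h1 h2
    rw [hMS, hSconst t h1 h2]
  have hIconst : ∀ t, c ≤ t → t < a j → runInf M t = runInf M c := by
    intro t h1 h2
    refine (key c t hc0.le h1 ?_).symm
    intro k ⟨hk1, hk2⟩
    have : k < j := (hiff t h1 h2 k).mp hk2
    exact absurd ((hiff c le_rfl hcaj k).mpr this) (not_le.mpr hk1)
  set I_c : ℝ := runInf M c with hIc
  have hmem : Ioo c (a j) ∈ nhdsWithin (a j) (Iio (a j)) :=
    Ioo_mem_nhdsLT_of_mem ⟨hcaj, le_rfl⟩
  have hIle : Ileft j = I_c := by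
    refine tendsto_nhds_unique (hIleft j) ?_
    refine (tendsto_const_nhds (x := I_c)).congr' ?_
    exact eventually_of_mem hmem fun t ht => (hIconst t ht.1.le ht.2).symm
  have hGten : Tendsto G (nhdsWithin (a j) (Iio (a j))) (nhds (G (a j))) :=
    (hGa j).tendsto.mono_left nhdsWithin_le_nhds
  have hMs : Mstarleft j = G (a j) - Sm - I_c := by
    refine tendsto_nhds_unique (hMstarleft j) ?_
    refine (((hGten.sub_const Sm).sub_const I_c)).congr' ?_
    refine eventually_of_mem hmem fun t ht => ?_
    simp only
    rw [hMconst t ht.1.le ht.2, hIconst t ht.1.le ht.2]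
  have hMaj : M (a j) = G (a j) - (Sm + b j) := by
    rw [hMS]
    have : S (a j) = ∑ k ∈ Finset.range (j + 1), b k := by
      apply aux_S_eq
      intro k
      rw [ha.le_iff_le, Nat.lt_succ_iff]
    rw [this, Finset.sum_range_succ]
  have hIc_le : I_c ≤ 0 :=
    le_trans (csInf_le (hbdd c) ⟨c, ⟨hc0.le, le_rfl⟩, rfl⟩) (min_le_left _ _)
  have hIco : sInf ((fun s => min 0 (M s)) '' Ico 0 (a j)) = I_c := by
    apply le_antisymm
    · exact csInf_le_csInf ((hbdd (a j)).mono (image_mono Ico_subset_Icc_self))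
        (hne c hc0.le)
        (image_mono (fun s hs => ⟨hs.1, lt_of_le_of_lt hs.2 hcaj⟩))
    · apply le_csInf ((Set.nonempty_Ico.mpr (hapos j)).image _)
      rintro x ⟨s, hs, rfl⟩
      rcases le_or_gt s c with h | h
      · exact csInf_le (hbdd c) ⟨s, ⟨hs.1, h⟩, rfl⟩
      · have hMs' : M c ≤ M s := by
          rw [hMconst c le_rfl hcaj, hMconst s h.le hs.2]
          have := hGmono h.le
          linarith
        calc I_c ≤ min 0 (M c) := csInf_le (hbdd c) ⟨c, ⟨hc0.le, le_rfl⟩, rfl⟩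
          _ ≤ min 0 (M s) := min_le_min le_rfl hMs'
  have hIaj : runInf M (a j) = min I_c (min 0 (M (a j))) := by
    have hsplit : Icc (0:ℝ) (a j) = Ico 0 (a j) ∪ {a j} :=
      (Set.Ico_union_right (hapos j).le).symm
    rw [runInf, hsplit, image_union, image_singleton,
      csInf_union ((hbdd (a j)).mono (image_mono Ico_subset_Icc_self))
        ((Set.nonempty_Ico.mpr (hapos j)).image _)
        bddBelow_singleton (singleton_nonempty _),
      csInf_singleton, hIco]
  rw [hIle, hIaj, hMs, hMaj]
  constructor
  · intro h
    have h2 : min 0 (G (a j) - (Sm + b j)) < I_c := by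
      rcases min_lt_iff.mp h with h' | h'
      · exact absurd h' (lt_irrefl _)
      · exact h'
    have h3 : G (a j) - (Sm + b j) < I_c := by
      rcases min_lt_iff.mp h2 with h' | h'
      · linarith
      · exact h'
    linarith
  · intro h
    have h3 : G (a j) - (Sm + b j) < I_c := by linarith
    exact lt_of_le_of_lt ((min_le_right _ _).trans (min_le_right _ _)) h3
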